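/- Let f (with white fixed point set W) be a decorated permutation of [2n] of type C, let 𝓘 be its Grassmann necklace, let M be the positroid of 𝓘, and let S := {a ∈ [n] : f⁻¹(a) > n} and r := |S| + 1. Then every symmetric weakly separated collection in M contains at most r pair-free elements. -/

import Mathlib

open Finset

/-- Position of `x` in the cyclic order on `[m] = {1,…,m}` starting at `a`:
`a` has position `0`, `a+1` position `1`, …, `a-1` position `m-1`. -/
def cpos (m a x : ℕ) : ℕ := (x + m - a) % m

/-- The strict cyclic order `x <_a y` on `[m]`. -/
def clt (m a x y : ℕ) : Prop := cpos m a x < cpos m a y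

instance (m a x y : ℕ) : Decidable (clt m a x y) :=
  inferInstanceAs (Decidable (_ < _))

/-- `I` and `J` are weakly separated as subsets of `[m]`: there do not exist
`c ∈ [m]` and `x₁ <_c x₂ <_c x₃ <_c x₄` with `x₁, x₃ ∈ I∖J` and `x₂, x₄ ∈ J∖I`. -/
def WSep (m : ℕ) (I J : Finset ℕ) : Prop :=
  ¬ ∃ c x₁ x₂ x₃ x₄ : ℕ, c ∈ Finset.Icc 1 m ∧
      x₁ ∈ I \ J ∧ x₃ ∈ I \ J ∧ x₂ ∈ J \ I ∧ x₄ ∈ J \ I ∧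
      clt m c x₁ x₂ ∧ clt m c x₂ x₃ ∧ clt m c x₃ x₄

/-- A weakly separated collection of `k`-element subsets of `[m]`. -/
def IsWSColl (m k : ℕ) (C : Finset (Finset ℕ)) : Prop :=
  (∀ I ∈ C, I ⊆ Finset.Icc 1 m ∧ I.card = k) ∧
    ∀ I ∈ C, ∀ J ∈ C, WSep m I J

/-- `Ī := [2n] ∖ {i' : i ∈ I}` where `i' = 2n+1-i`. -/
def bar (n : ℕ) (I : Finset ℕ) : Finset ℕ :=
  Finset.Icc 1 (2 * n) \ I.image fun i => 2 * n + 1 - i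

/-- A collection is symmetric if it is closed under `I ↦ Ī`. -/
def IsSym (n : ℕ) (C : Finset (Finset ℕ)) : Prop := ∀ I ∈ C, bar n I ∈ C

/-- `I` has a full pair at `{a, a'}`. -/
def FullPair (n : ℕ) (I : Finset ℕ) (a : ℕ) : Prop := a ∈ I ∧ 2 * n + 1 - a ∈ I

/-- `I` has an empty pair at `{a, a'}`. -/
def EmptyPair (n : ℕ) (I : Finset ℕ) (a : ℕ) : Prop := a ∉ I ∧ 2 * n + 1 - a ∉ I

instance (n : ℕ) (I : Finset ℕ) (a : ℕ) : Decidable (FullPair n I a) :=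
  inferInstanceAs (Decidable (_ ∈ I ∧ _ ∈ I))

instance (n : ℕ) (I : Finset ℕ) (a : ℕ) : Decidable (EmptyPair n I a) :=
  inferInstanceAs (Decidable (_ ∉ I ∧ _ ∉ I))

/-- `I` is pair-free: it has no full pair. -/
def PairFree (n : ℕ) (I : Finset ℕ) : Prop :=
  ∀ a ∈ Finset.Icc 1 n, ¬ FullPair n I a

instance (n : ℕ) (I : Finset ℕ) : Decidable (PairFree n I) :=
  inferInstanceAs (Decidable (∀ a ∈ Finset.Icc 1 n, ¬ FullPair n I a))

/-- `I` is admissible: `I` and `Ī` are weakly separated. -/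
def Admissible (n : ℕ) (I : Finset ℕ) : Prop := WSep (2 * n) I (bar n I)

/-- `I` is left-handed: admissible, has at least one full pair, and every full
pair of `I` is above every empty pair of `I`. -/
def LeftHanded (n : ℕ) (I : Finset ℕ) : Prop :=
  Admissible n I ∧ (∃ a ∈ Finset.Icc 1 n, FullPair n I a) ∧
    ∀ a ∈ Finset.Icc 1 n, ∀ b ∈ Finset.Icc 1 n,
      FullPair n I a → EmptyPair n I b → a < b

/-- The Gale order `I ≤_a J`: comparing the sorted lists of positions (in the
cyclic order starting at `a`) elementwise. -/
def galeLe (m a : ℕ) (I J : Finset ℕ) : Prop :=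
  List.Forall₂ (· ≤ ·) ((I.image (cpos m a)).sort (· ≤ ·))
    ((J.image (cpos m a)).sort (· ≤ ·))

/-- A Grassmann necklace of type `(n, 2n)`: a sequence `I_1, …, I_{2n}` of
`n`-element subsets of `[2n]` with `I_i ∖ {i} ⊆ I_{i+1}` (indices mod `2n`). -/
def IsNecklace (n : ℕ) (ℐ : ℕ → Finset ℕ) : Prop :=
  (∀ a ∈ Finset.Icc 1 (2 * n), ℐ a ⊆ Finset.Icc 1 (2 * n) ∧ (ℐ a).card = n) ∧
    ∀ i ∈ Finset.Icc 1 (2 * n), ℐ i \ {i} ⊆ ℐ (i % (2 * n) + 1)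

/-- A Grassmann necklace is of type C if `I_{i'} = bar (I_{i+1})` (indices mod `2n`). -/
def IsTypeC (n : ℕ) (ℐ : ℕ → Finset ℕ) : Prop :=
  ∀ i ∈ Finset.Icc 1 (2 * n), ℐ (2 * n + 1 - i) = bar n (ℐ (i % (2 * n) + 1))

/-- The positroid of a Grassmann necklace: all `n`-element subsets `J` of `[2n]`
with `I_a ≤_a J` for all `a ∈ [2n]`. -/
def positroid (n : ℕ) (ℐ : ℕ → Finset ℕ) : Set (Finset ℕ) :=
  {J | J ⊆ Finset.Icc 1 (2 * n) ∧ J.card = n ∧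
    ∀ a ∈ Finset.Icc 1 (2 * n), galeLe (2 * n) a (ℐ a) J}

/-- A weakly separated collection in the positroid of the necklace `ℐ`:
`{I_1,…,I_{2n}} ⊆ C ⊆ M` and `C` is pairwise weakly separated. -/
def IsWSCollIn (n : ℕ) (ℐ : ℕ → Finset ℕ) (C : Finset (Finset ℕ)) : Prop :=
  (∀ a ∈ Finset.Icc 1 (2 * n), ℐ a ∈ C) ∧ (∀ J ∈ C, J ∈ positroid n ℐ) ∧
    ∀ I ∈ C, ∀ J ∈ C, WSep (2 * n) I J

/-- A decorated permutation of `[2n]` of type C: a bijection `f` of `[2n]` with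
`f(i') = (f(i))'`, together with a set `W` of white fixed points such that a
fixed point `i` lies in `W` iff `i'` does not. -/
def IsDecPermC (n : ℕ) (f : Equiv.Perm ℕ) (W : Finset ℕ) : Prop :=
  (∀ i ∈ Finset.Icc 1 (2 * n), f i ∈ Finset.Icc 1 (2 * n)) ∧
  (∀ i ∈ Finset.Icc 1 (2 * n), f (2 * n + 1 - i) = 2 * n + 1 - f i) ∧
  (∀ w ∈ W, w ∈ Finset.Icc 1 (2 * n) ∧ f w = w) ∧
  (∀ i ∈ Finset.Icc 1 (2 * n), f i = i → (i ∈ W ↔ 2 * n + 1 - i ∉ W))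

/-- The Grassmann necklace of a decorated permutation:
`I_a = {i ∈ [2n] : i ≠ f⁻¹(i) and i <_a f⁻¹(i)} ∪ W`. -/
def necklaceOf (n : ℕ) (f : Equiv.Perm ℕ) (W : Finset ℕ) (a : ℕ) : Finset ℕ :=
  ((Finset.Icc 1 (2 * n)).filter fun i => i ≠ f.symm i ∧ clt (2 * n) a i (f.symm i)) ∪ W

/-- `(i,j)` is an alignment of `f`: the numbers `i, f(i), f(j), j` are distinct
and appear in cyclic order. -/
def IsAlignment (n : ℕ) (f : Equiv.Perm ℕ) (i j : ℕ) : Prop :=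
  ([i, f i, f j, j] : List ℕ).Pairwise (· ≠ ·) ∧
    ∃ c ∈ Finset.Icc 1 (2 * n), clt (2 * n) c i (f i) ∧
      clt (2 * n) c (f i) (f j) ∧ clt (2 * n) c (f j) j

/- ======================= auxiliary lemmas ======================= -/

lemma cpos_eq {m a x : ℕ} (ha1 : 1 ≤ a) (ham : a ≤ m) (hx1 : 1 ≤ x) (hxm : x ≤ m) :
    cpos m a x = if a ≤ x then x - a else x + m - a := by
  unfold cpos
  rcases le_or_gt a x with h | h
  · have e : x + m - a = (x - a) + m := by omega
    rw [e, Nat.add_mod_right, Nat.mod_eq_of_lt (by omega), if_pos h]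
  · rw [Nat.mod_eq_of_lt (by omega), if_neg (by omega)]

lemma forall2_countP {l l' : List ℕ} (t : ℕ) (h : List.Forall₂ (· ≤ ·) l l') :
    l'.countP (fun x => x < t) ≤ l.countP (fun x => x < t) := by
  induction h with
  | nil => simp
  | @cons a b l1 l2 hab h ih =>
    simp only [List.countP_cons]
    rcases lt_or_ge b t with h1 | h1 <;> rcases lt_or_ge a t with h2 | h2 <;>
      simp [h1, h2, Nat.not_lt.2 h1, Nat.not_lt.2 h2] <;> omega

lemma countP_sort (s : Finset ℕ) (p : ℕ → Bool) :
    ((s.sort (·≤·)).countP p) = (s.filter (fun x => p x = true)).card := by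
  have h1 : (s.filter (fun x => p x = true)).card
      = Multiset.countP (fun x => p x = true) s.val := by
    show Multiset.card ((s.filter (fun x => p x = true)).val) = _
    rw [Finset.filter_val, ← Multiset.countP_eq_card_filter]
  rw [h1, ← Finset.sort_eq (s := s) (r := (·≤·)), Multiset.coe_countP]
  simp

lemma cpos_injOn {m a : ℕ} (ha1 : 1 ≤ a) (ham : a ≤ m) :
    Set.InjOn (cpos m a) (Finset.Icc 1 m : Finset ℕ) := by
  intro x hx y hy hxy
  simp only [Finset.coe_Icc, Set.mem_Icc] at hx hy
  rw [cpos_eq ha1 ham hx.1 hx.2, cpos_eq ha1 ham hy.1 hy.2] at hxy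
  split_ifs at hxy <;> omega

lemma gale_count {m a t : ℕ} {I J : Finset ℕ} (hI : I ⊆ Finset.Icc 1 m)
    (hJ : J ⊆ Finset.Icc 1 m) (ha1 : 1 ≤ a) (ham : a ≤ m) (h : galeLe m a I J) :
    (J.filter fun x => cpos m a x < t).card ≤ (I.filter fun x => cpos m a x < t).card := by
  have key : ∀ K : Finset ℕ, K ⊆ Finset.Icc 1 m →
      (K.filter fun x => cpos m a x < t).card
        = ((K.image (cpos m a)).sort (·≤·)).countP (fun y => y < t) := by
    intro K hK
    rw [countP_sort]
    have : (K.image (cpos m a)).filter (fun y => decide (y < t) = true)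
        = (K.filter fun x => cpos m a x < t).image (cpos m a) := by
      rw [Finset.filter_image]
      congr 1
      apply Finset.filter_congr
      intro x _; simp
    rw [this]
    rw [Finset.card_image_of_injOn ((cpos_injOn ha1 ham).mono ?_)]
    intro x hx
    simp only [Finset.coe_filter, Set.mem_setOf_eq] at hx
    exact Finset.mem_coe.2 (hK hx.1)
  rw [key I hI, key J hJ]
  exact forall2_countP t h

lemma pair_complete {n : ℕ} {I : Finset ℕ} (hsub : I ⊆ Finset.Icc 1 (2 * n))
    (hcard : I.card = n) (hpf : PairFree n I) :
    ∀ x, 1 ≤ x → x ≤ 2 * n → x ∉ I → 2 * n + 1 - x ∈ I := by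
  set r : ℕ → ℕ := fun x => min x (2 * n + 1 - x) with hr
  have hmem : ∀ x ∈ I, 1 ≤ x ∧ x ≤ 2 * n := by
    intro x hx; exact Finset.mem_Icc.1 (hsub hx)
  have hmaps : ∀ x ∈ I, r x ∈ Finset.Icc 1 n := by
    intro x hx
    obtain ⟨h1, h2⟩ := hmem x hx
    simp only [hr, Finset.mem_Icc]
    omega
  have hinj : Set.InjOn r I := by
    intro x hx y hy hxy
    obtain ⟨hx1, hx2⟩ := hmem x hx
    obtain ⟨hy1, hy2⟩ := hmem y hy
    by_contra hne
    have hxy' : x = 2 * n + 1 - y := by simp only [hr] at hxy; omega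
    exact hpf (r y) (hmaps y hy) (by
      constructor
      · rcases le_total y (2*n+1-y) with h | h
        · simpa [hr, min_eq_left h] using hy
        · simp only [hr, min_eq_right h]
          have : 2*n+1-y = x := by omega
          rw [this]; exact hx
      · rcases le_total y (2*n+1-y) with h | h
        · simp only [hr, min_eq_left h]
          have : 2*n+1-y = x := by omega
          rw [this]; exact hx
        · simp only [hr, min_eq_right h]
          have : 2*n+1-(2*n+1-y) = y := by omega
          rw [this]; exact hy)
  have himg : I.image r = Finset.Icc 1 n := by
    apply Finset.eq_of_subset_of_card_le
    · intro y hy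
      obtain ⟨x, hx, rfl⟩ := Finset.mem_image.1 hy
      exact hmaps x hx
    · rw [Finset.card_image_of_injOn hinj, hcard, Nat.card_Icc]; omega
  intro x hx1 hx2 hxI
  by_contra hxI'
  have : r x ∈ I.image r := by
    rw [himg]; simp only [hr, Finset.mem_Icc]; omega
  obtain ⟨y, hy, hxy⟩ := Finset.mem_image.1 this
  obtain ⟨hy1, hy2⟩ := hmem y hy
  have : y = x ∨ y = 2 * n + 1 - x := by simp only [hr] at hxy; omega
  rcases this with rfl | rfl
  · exact hxI hy
  · exact hxI' hy

lemma dichotomy {n : ℕ} {I J : Finset ℕ}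
    (hIsub : I ⊆ Finset.Icc 1 (2 * n)) (hJsub : J ⊆ Finset.Icc 1 (2 * n))
    (hJc : J.card = n)
    (hIpf : PairFree n I) (hJpf : PairFree n J)
    (hws : WSep (2 * n) I J)
    {p y : ℕ} (hp : p ∈ I \ J) (hpn : p ≤ n) (hy : y ∈ I \ J) (hyn : n < y) :
    False := by
  rw [Finset.mem_sdiff] at hp hy
  obtain ⟨hpI, hpJ⟩ := hp
  obtain ⟨hyI, hyJ⟩ := hy
  have hpb := Finset.mem_Icc.1 (hIsub hpI)
  have hyb := Finset.mem_Icc.1 (hIsub hyI)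
  set q := 2 * n + 1 - y with hq
  set p' := 2 * n + 1 - p with hp'
  have hqb : 1 ≤ q ∧ q ≤ n := by omega
  have hp'J : p' ∈ J := pair_complete hJsub hJc hJpf p hpb.1 hpb.2 hpJ
  have hp'I : p' ∉ I := fun h => hIpf p (Finset.mem_Icc.2 ⟨hpb.1, hpn⟩) ⟨hpI, h⟩
  have hqI : q ∉ I := by
    intro h
    exact hIpf q (Finset.mem_Icc.2 hqb) ⟨h, by rw [show 2*n+1-q = y by omega]; exact hyI⟩
  have hqJ : q ∈ J := by
    have := pair_complete hJsub hJc hJpf y hyb.1 hyb.2 hyJ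
    rwa [← hq] at this
  have hpq : p ≠ q := by
    intro h
    exact hIpf p (Finset.mem_Icc.2 ⟨hpb.1, hpn⟩)
      ⟨hpI, by rw [show 2*n+1-p = y by omega]; exact hyI⟩
  have hn1 : 1 ≤ n := le_trans hpb.1 hpn
  apply hws
  rcases lt_or_gt_of_ne hpq with hlt | hgt
  · refine ⟨1, p, q, y, p', Finset.mem_Icc.2 ⟨le_refl 1, by omega⟩,
      Finset.mem_sdiff.2 ⟨hpI, hpJ⟩, Finset.mem_sdiff.2 ⟨hyI, hyJ⟩,
      Finset.mem_sdiff.2 ⟨hqJ, hqI⟩, Finset.mem_sdiff.2 ⟨hp'J, hp'I⟩, ?_, ?_, ?_⟩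
    all_goals
      unfold clt
      rw [cpos_eq (by omega) (by omega) (by omega) (by omega),
          cpos_eq (by omega) (by omega) (by omega) (by omega)]
      split_ifs <;> omega
  · refine ⟨p, p, p', y, q, Finset.mem_Icc.2 ⟨hpb.1, by omega⟩,
      Finset.mem_sdiff.2 ⟨hpI, hpJ⟩, Finset.mem_sdiff.2 ⟨hyI, hyJ⟩,
      Finset.mem_sdiff.2 ⟨hp'J, hp'I⟩, Finset.mem_sdiff.2 ⟨hqJ, hqI⟩, ?_, ?_, ?_⟩
    all_goals
      unfold clt
      rw [cpos_eq (by omega) (by omega) (by omega) (by omega),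
          cpos_eq (by omega) (by omega) (by omega) (by omega)]
      split_ifs <;> omega

/-- If `I \ J` is a nonempty subset of `[1..n]`, and `J \ I ∩ [1..n] = ∅`,
then `φ J < φ I`. -/
lemma phi_lt_aux {n : ℕ} {I J : Finset ℕ}
    (hne : (I \ J).Nonempty)
    (hlow : ∀ x ∈ I \ J, x ≤ n) (hhigh : ∀ x ∈ J \ I, ¬ x ≤ n) :
    (J.filter (fun x => x ≤ n)).card < (I.filter (fun x => x ≤ n)).card := by
  have hIdec : I.filter (fun x => x ≤ n)
      = ((I ∩ J).filter (fun x => x ≤ n)) ∪ ((I \ J).filter (fun x => x ≤ n)) := by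
    have e : I ∩ J ∪ I \ J = I := by
      ext x; simp only [Finset.mem_union, Finset.mem_inter, Finset.mem_sdiff]; tauto
    rw [← Finset.filter_union, e]
  have hJdec : J.filter (fun x => x ≤ n)
      = ((J ∩ I).filter (fun x => x ≤ n)) ∪ ((J \ I).filter (fun x => x ≤ n)) := by
    have e : J ∩ I ∪ J \ I = J := by
      ext x; simp only [Finset.mem_union, Finset.mem_inter, Finset.mem_sdiff]; tauto
    rw [← Finset.filter_union, e]
  have h1 : ((I \ J).filter (fun x => x ≤ n)) = I \ J :=
    Finset.filter_true_of_mem hlow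
  have h2 : ((J \ I).filter (fun x => x ≤ n)) = ∅ :=
    Finset.filter_false_of_mem hhigh
  have hd1 : Disjoint ((I ∩ J).filter (fun x => x ≤ n)) ((I \ J).filter (fun x => x ≤ n)) :=
    Finset.disjoint_filter_filter (Finset.disjoint_sdiff_inter I J).symm
  rw [hIdec, hJdec, h2, Finset.union_empty, Finset.card_union_of_disjoint hd1, h1,
    Finset.inter_comm J I]
  have := Finset.card_pos.2 hne
  omega

/- ======================= end auxiliary lemmas ======================= -/

/-- Every symmetric weakly separated collection in `M` contains
at most `r = |S| + 1` pair-free elements, where `S = {a ∈ [n] : f⁻¹(a) > n}`. -/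
theorem statement11 (n : ℕ) (f : Equiv.Perm ℕ) (W : Finset ℕ)
    (hf : IsDecPermC n f W)
    (C : Finset (Finset ℕ)) (hC : IsWSCollIn n (necklaceOf n f W) C)
    (hsym : IsSym n C) :
    (C.filter fun I => PairFree n I).card
      ≤ ((Finset.Icc 1 n).filter fun a => n < f.symm a).card + 1 := by
  rcases Nat.eq_zero_or_pos n with rfl | hn1
  · -- degenerate case n = 0
    have : (C.filter fun I => PairFree 0 I).card ≤ 1 := by
      apply Finset.card_le_one.2
      intro a ha b hb
      have ha' := (hC.2.1 a (Finset.mem_filter.1 ha).1).1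
      have hb' := (hC.2.1 b (Finset.mem_filter.1 hb).1).1
      simp only [Nat.mul_zero, Finset.Icc_self, show (2:ℕ)*0 = 0 from rfl] at ha' hb'
      have ha0 : a = ∅ := Finset.subset_empty.1 (by simpa using ha')
      have hb0 : b = ∅ := Finset.subset_empty.1 (by simpa using hb')
      rw [ha0, hb0]
    omega
  -- main case n ≥ 1
  set m := 2 * n with hm
  set ℐ := necklaceOf n f W with hI
  set φ : Finset ℕ → ℕ := fun K => (K.filter (fun x => x ≤ n)).card with hphi
  -- basic facts
  have hm1 : 1 ≤ m := by omega
  have hmem2 : ∀ J ∈ C, J ⊆ Finset.Icc 1 m ∧ J.card = n := by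
    intro J hJ
    exact ⟨(hC.2.1 J hJ).1, (hC.2.1 J hJ).2.1⟩
  -- f.symm maps [1..2n] to itself
  have hsymm_maps : ∀ i ∈ Finset.Icc 1 m, f.symm i ∈ Finset.Icc 1 m := by
    have himg : (Finset.Icc 1 m).image f = Finset.Icc 1 m := by
      apply Finset.eq_of_subset_of_card_le
      · intro y hy
        obtain ⟨x, hx, rfl⟩ := Finset.mem_image.1 hy
        exact hf.1 x hx
      · rw [Finset.card_image_of_injective _ f.injective]
    intro i hi
    rw [← himg] at hi
    obtain ⟨y, hy, hyi⟩ := Finset.mem_image.1 hi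
    have : f.symm i = y := by rw [← hyi]; exact f.symm_apply_apply y
    rw [this]; exact hy
  -- the necklace sets are subsets of [1..2n]
  have hneck_sub : ∀ a, ℐ a ⊆ Finset.Icc 1 m := by
    intro a x hx
    rcases Finset.mem_union.1 hx with h | h
    · exact Finset.filter_subset _ _ h
    · exact (hf.2.2.1 x h).1
  -- membership of 1 and n+1 in [1..2n]
  have h1mem : (1:ℕ) ∈ Finset.Icc 1 m := Finset.mem_Icc.2 ⟨le_refl 1, by omega⟩
  have hn1mem : (n+1) ∈ Finset.Icc 1 m := Finset.mem_Icc.2 ⟨by omega, by omega⟩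
  -- c**** upper bound: φ J ≤ φ (ℐ 1) for J in the positroid
  have filter1 : ∀ K : Finset ℕ, K ⊆ Finset.Icc 1 m →
      K.filter (fun x => cpos m 1 x < n) = K.filter (fun x => x ≤ n) := by
    intro K hK
    apply Finset.filter_congr
    intro x hx
    have hb := Finset.mem_Icc.1 (hK hx)
    rw [cpos_eq (le_refl 1) hm1 hb.1 hb.2]
    simp only [if_pos hb.1]
    constructor <;> intro h <;> simp_all <;> omega
  have filtern1 : ∀ K : Finset ℕ, K ⊆ Finset.Icc 1 m →
      K.filter (fun x => cpos m (n+1) x < n) = K.filter (fun x => n < x) := by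
    intro K hK
    apply Finset.filter_congr
    intro x hx
    have hb := Finset.mem_Icc.1 (hK hx)
    rw [cpos_eq (by omega) (by omega) hb.1 hb.2]
    split_ifs with h
    · constructor <;> intro h2 <;> simp_all <;> omega
    · constructor <;> intro h2 <;> simp_all <;> omega
  have hub : ∀ J ∈ C, φ J ≤ φ (ℐ 1) := by
    intro J hJ
    obtain ⟨hJsub, hJc, hgale⟩ := hC.2.1 J hJ
    have := gale_count (t := n) (hneck_sub 1) hJsub (le_refl 1) hm1 (hgale 1 h1mem)
    rwa [filter1 J hJsub, filter1 (ℐ 1) (hneck_sub 1)] at this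
  have hlb : ∀ J ∈ C, φ (ℐ (n+1)) ≤ φ J := by
    intro J hJ
    obtain ⟨hJsub, hJc, hgale⟩ := hC.2.1 J hJ
    have hcount := gale_count (t := n) (hneck_sub (n+1)) hJsub (by omega) (by omega)
      (hgale (n+1) hn1mem)
    rw [filtern1 J hJsub, filtern1 (ℐ (n+1)) (hneck_sub (n+1))] at hcount
    -- card (ℐ (n+1)) = n since it is in the positroid
    have hNc : (ℐ (n+1)).card = n := (hC.2.1 _ (hC.1 (n+1) hn1mem)).2.1
    have e1 : (J.filter (fun x => x ≤ n)).card + (J.filter (fun x => ¬ x ≤ n)).card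
        = J.card := Finset.card_filter_add_card_filter_not _
    have e2 : ((ℐ (n+1)).filter (fun x => x ≤ n)).card
        + ((ℐ (n+1)).filter (fun x => ¬ x ≤ n)).card
        = (ℐ (n+1)).card := Finset.card_filter_add_card_filter_not _
    have e3 : ∀ K : Finset ℕ, K.filter (fun x => ¬ x ≤ n) = K.filter (fun x => n < x) := by
      intro K; apply Finset.filter_congr; intro x _; simp [not_le]
    rw [e3] at e1 e2
    simp only [hphi]
    omega
  -- **** the S bound: φ (ℐ 1) ≤ φ (ℐ (n+1)) + |S|
  have hSbound : φ (ℐ 1) ≤ φ (ℐ (n+1))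
      + ((Finset.Icc 1 n).filter fun a => n < f.symm a).card := by
    have hsub : (ℐ 1).filter (fun x => x ≤ n)
        ⊆ ((ℐ (n+1)).filter (fun x => x ≤ n))
          ∪ ((Finset.Icc 1 n).filter fun a => n < f.symm a) := by
      intro x hx
      obtain ⟨hxI, hxn⟩ := Finset.mem_filter.1 hx
      rcases Finset.mem_union.1 hxI with h | h
      · -- x in the filter part of the necklace at 1
        obtain ⟨hxIcc, hxf⟩ := Finset.mem_filter.1 h
        obtain ⟨hne, hclt⟩ := hxf
        have hxb := Finset.mem_Icc.1 hxIcc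
        have hzb := Finset.mem_Icc.1 (hsymm_maps x hxIcc)
        unfold clt at hclt
        rw [cpos_eq (le_refl 1) hm1 hxb.1 hxb.2,
            cpos_eq (le_refl 1) hm1 hzb.1 hzb.2] at hclt
        simp only [if_pos hxb.1, if_pos hzb.1] at hclt
        rcases le_or_gt (f.symm x) n with hz | hz
        · -- goes into ℐ (n+1)
          apply Finset.mem_union_left
          apply Finset.mem_filter.2
          refine ⟨Finset.mem_union_left _ (Finset.mem_filter.2 ⟨hxIcc, hne, ?_⟩), hxn⟩
          unfold clt
          rw [cpos_eq (by omega) (by omega) hxb.1 hxb.2,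
              cpos_eq (by omega) (by omega) hzb.1 hzb.2]
          split_ifs <;> omega
        · -- goes into S
          apply Finset.mem_union_right
          exact Finset.mem_filter.2 ⟨Finset.mem_Icc.2 ⟨hxb.1, hxn⟩, hz⟩
      · -- x ∈ W : white fixed points are in every necklace set
        apply Finset.mem_union_left
        exact Finset.mem_filter.2 ⟨Finset.mem_union_right _ h, hxn⟩
    calc φ (ℐ 1) ≤ (((ℐ (n+1)).filter (fun x => x ≤ n))
          ∪ ((Finset.Icc 1 n).filter fun a => n < f.symm a)).card :=
        Finset.card_le_card hsub
      _ ≤ _ := Finset.card_union_le _ _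
  -- **** injectivity of φ on the pair-free elements of C
  have hinj : Set.InjOn φ (C.filter fun I => PairFree n I) := by
    intro I hI J hJ heq
    simp only [Finset.coe_filter, Set.mem_setOf_eq] at hI hJ
    obtain ⟨hIC, hIpf⟩ := hI
    obtain ⟨hJC, hJpf⟩ := hJ
    by_contra hne
    obtain ⟨hIsub, hIc⟩ := hmem2 I hIC
    obtain ⟨hJsub, hJc⟩ := hmem2 J hJC
    have hws : WSep m I J := hC.2.2 I hIC J hJC
    have hws' : WSep m J I := hC.2.2 J hJC I hIC
    have hndJ : (I \ J).Nonempty := by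
      rw [Finset.sdiff_nonempty]
      intro hsub2
      exact hne (Finset.eq_of_subset_of_card_le hsub2 (by omega))
    -- helper to move elements across pairs
    have cross : ∀ {A B : Finset ℕ}, A ⊆ Finset.Icc 1 m → B ⊆ Finset.Icc 1 m →
        A.card = n → PairFree n A → PairFree n B →
        ∀ y ∈ B \ A, (2*n+1-y) ∈ A \ B := by
      intro A B hAs hBs hAc hApf hBpf y hy
      rw [Finset.mem_sdiff] at hy ⊢
      have hyb := Finset.mem_Icc.1 (hBs hy.1)
      have hy'A : 2*n+1-y ∈ A := pair_complete hAs hAc hApf y hyb.1 (by omega) hy.2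
      refine ⟨hy'A, ?_⟩
      intro hy'B
      rcases le_or_gt y n with h | h
      · exact hBpf y (Finset.mem_Icc.2 ⟨hyb.1, h⟩) ⟨hy.1, hy'B⟩
      · refine hBpf (2*n+1-y) (Finset.mem_Icc.2 ⟨by omega, by omega⟩) ⟨hy'B, ?_⟩
        rw [show 2*n+1-(2*n+1-y) = y by omega]
        exact hy.1
    by_cases hall : ∀ x ∈ I \ J, x ≤ n
    · -- φ J < φ I
      have hhigh : ∀ y ∈ J \ I, ¬ y ≤ n := by
        intro y hy hyn
        have hy' := cross hIsub hJsub hIc hIpf hJpf y hy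
        have := hall _ hy'
        have hyb := Finset.mem_Icc.1 (hJsub ((Finset.mem_sdiff.1 hy).1))
        omega
      exact absurd heq (Nat.ne_of_gt (phi_lt_aux hndJ hall hhigh))
    · -- some element of I \ J exceeds n; then all do, and φ I < φ J
      push_neg at hall
      obtain ⟨x, hx, hxn⟩ := hall
      have hallhigh : ∀ z ∈ I \ J, ¬ z ≤ n := by
        intro z hz hzn
        exact dichotomy hIsub hJsub hJc hIpf hJpf hws hz hzn hx hxn
      have hx' := cross hJsub hIsub hJc hJpf hIpf x hx
      have hxb := Finset.mem_Icc.1 (hIsub ((Finset.mem_sdiff.1 hx).1))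
      have hlow : ∀ y ∈ J \ I, y ≤ n := by
        intro y hy
        by_contra hyn
        exact dichotomy hJsub hIsub hIc hJpf hIpf hws' hx' (by omega) hy (by omega)
      have hndI : (J \ I).Nonempty := ⟨_, hx'⟩
      exact absurd heq.symm (Nat.ne_of_gt (phi_lt_aux hndI hlow hallhigh))
  -- **** putting everything together
  have hmap : ∀ J ∈ C.filter (fun I => PairFree n I),
      φ J ∈ Finset.Icc (φ (ℐ (n+1))) (φ (ℐ 1)) := by
    intro J hJ
    have hJC := (Finset.mem_filter.1 hJ).1
    exact Finset.mem_Icc.2 ⟨hlb J hJC, hub J hJC⟩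
  have hcard := Finset.card_le_card_of_injOn φ hmap hinj
  rw [Nat.card_Icc] at hcard
  have hS := hSbound
  omega
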